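/- Let b ∈ F_q with b ∉ Θ(F_q) (equivalently, x² + x + b is irreducible over F_q). Then for every a ∈ F_q*, the sum of λ(a·(α² + α + b)^{-1}) over all α ∈ F_q equals −K(a) − 1. -/

import Mathlib

open Finset

/-- The trace map `tr : F_q → F_2 ⊆ F_q`, `tr x = x + x² + ⋯ + x^(2^(r-1))`. -/
def trF {F : Type*} [Field F] (r : ℕ) (x : F) : F :=
  ∑ i ∈ Finset.range r, x ^ (2 ^ i)

/-- The canonical additive character `λ(x) = (-1)^(tr x) ∈ ℤ` of `F_q`. -/
def lamF {F : Type*} [Field F] [DecidableEq F] (r : ℕ) (x : F) : ℤ :=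
  if trF r x = 0 then 1 else -1

/-- The Kloosterman sum `K(a) = ∑_{α ∈ F_q*} λ(α + a·α⁻¹)`. -/
def Kloos {F : Type*} [Field F] [Fintype F] [DecidableEq F] (r : ℕ) (a : F) : ℤ :=
  ∑ α ∈ Finset.univ.filter (fun α : F => α ≠ 0), lamF r (α + a * α⁻¹)

set_option linter.unusedSectionVars false
set_option linter.unusedVariables false

section Aux
variable {F : Type*} [Field F] [DecidableEq F]

lemma trF_add (h2 : CharP F 2) (r : ℕ) (x y : F) :
    trF r (x + y) = trF r x + trF r y := by
  haveI := h2
  haveI : Fact (Nat.Prime 2) := ⟨Nat.prime_two⟩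
  unfold trF
  rw [← Finset.sum_add_distrib]
  exact Finset.sum_congr rfl fun i _ => add_pow_char_pow x y 2 i

lemma trF_zero (r : ℕ) : trF (F := F) r 0 = 0 := by
  simp [trF, zero_pow (Nat.pos_iff.mp (Nat.pos_pow_of_pos _ two_pos)).symm ∘ Eq.symm]

lemma trF_sq [Fintype F] (r : ℕ) (hF : Fintype.card F = 2 ^ r) (x : F) :
    trF r (x ^ 2) = trF r x := by
  have hx : x ^ 2 ^ r = x := by rw [← hF]; exact FiniteField.pow_card x
  have h1 : ∀ i, (x ^ 2) ^ 2 ^ i = x ^ 2 ^ (i + 1) := fun i => by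
    rw [← pow_mul, ← pow_succ']
  unfold trF
  calc ∑ i ∈ range r, (x^2)^(2^i) = ∑ i ∈ range r, x ^ 2 ^ (i+1) := by simp [h1]
    _ = ∑ i ∈ range (r+1), x ^ 2 ^ i - x ^ 2 ^ 0 := by
        rw [Finset.sum_range_succ']; ring
    _ = ∑ i ∈ range r, x ^ 2 ^ i := by
        rw [Finset.sum_range_succ, hx, pow_zero, pow_one]; ring

lemma trF_mem [Fintype F] (h2 : CharP F 2) (r : ℕ) (hF : Fintype.card F = 2 ^ r) (x : F) :
    trF r x = 0 ∨ trF r x = 1 := by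
  haveI := h2
  haveI : Fact (Nat.Prime 2) := ⟨Nat.prime_two⟩
  have h : trF r x ^ 2 = trF r x := by
    conv_rhs => rw [← trF_sq r hF x]
    unfold trF
    rw [sum_pow_char]
    exact Finset.sum_congr rfl fun i _ => pow_right_comm x (2^i) 2
  have h0 : trF r x * (trF r x - 1) = 0 := by linear_combination h
  rcases mul_eq_zero.mp h0 with h' | h'
  · exact Or.inl h'
  · exact Or.inr (by linear_combination h')

lemma char_two_of_card [Fintype F] (r : ℕ) (hr : 0 < r) (hF : Fintype.card F = 2 ^ r) :
    CharP F 2 := by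
  haveI := ringChar.charP F
  have hp : (ringChar F).Prime := CharP.char_is_prime F _
  have h0 : ((2 ^ r : ℕ) : F) = 0 := by rw [← hF]; exact FiniteField.cast_card_eq_zero F
  have hdvd : ringChar F ∣ 2 ^ r := (CharP.cast_eq_zero_iff F (ringChar F) _).mp h0
  have := (Nat.prime_dvd_prime_iff_eq hp Nat.prime_two).mp (hp.dvd_of_dvd_pow hdvd)
  exact this ▸ ringChar.charP F

lemma AS_eq_iff (h2 : CharP F 2) (α β : F) :
    α ^ 2 + α = β ^ 2 + β ↔ α = β ∨ α = β + 1 := by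
  haveI := h2
  have hc2 : (2 : F) = 0 := CharTwo.two_eq_zero
  constructor
  · intro h
    have key : (α + β) * (α + β + 1) = 0 := by
      linear_combination h + (β^2 + β + α*β) * hc2
    rcases mul_eq_zero.mp key with h' | h'
    · exact Or.inl (by linear_combination h' - β * hc2)
    · exact Or.inr (by linear_combination h' - (β+1) * hc2)
  · rintro (rfl | rfl)
    · rfl
    · linear_combination (β + 1) * hc2

lemma fiber_card (h2 : CharP F 2) [Fintype F] (w α0 : F) (h0 : α0 ^ 2 + α0 = w) :
    (univ.filter fun α : F => α ^ 2 + α = w).card = 2 := by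
  have hset : (univ.filter fun α : F => α ^ 2 + α = w) = {α0, α0 + 1} := by
    ext α
    simp only [mem_filter, mem_univ, true_and, mem_insert, mem_singleton]
    constructor
    · intro h
      exact (AS_eq_iff h2 α α0).mp (by rw [h, h0])
    · rintro (rfl | rfl)
      · exact h0
      · rw [← h0]
        exact ((AS_eq_iff h2 (α0+1) α0).mpr (Or.inr rfl))
  rw [hset, card_insert_of_notMem (by simp), card_singleton]

lemma card_trF_zero_le [Fintype F] (r : ℕ) (hr : 0 < r) :
    (univ.filter fun x : F => trF r x = 0).card ≤ 2 ^ (r - 1) := by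
  set P : Polynomial F := ∑ i ∈ range r, Polynomial.X ^ (2 ^ i) with hP
  have heval : ∀ x : F, P.eval x = trF r x := by
    intro x; simp [hP, trF, Polynomial.eval_finset_sum]
  have hdeg : P.natDegree ≤ 2 ^ (r - 1) := by
    apply Polynomial.natDegree_sum_le_of_forall_le
    intro i hi
    rw [Polynomial.natDegree_X_pow]
    have hi' : i < r := mem_range.mp hi
    exact Nat.pow_le_pow_right (by norm_num) (by omega)
  have hne : P ≠ 0 := by
    intro h
    have hco : P.coeff (2 ^ (r-1)) = 1 := by
      rw [hP, Polynomial.finset_sum_coeff]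
      rw [Finset.sum_eq_single (r-1)]
      · simp
      · intro i hi hnei
        rw [Polynomial.coeff_X_pow, if_neg]
        intro hc
        exact hnei (Nat.pow_right_injective (le_refl 2) hc.symm)
      · intro hmem; exact absurd (mem_range.mpr (by omega)) hmem
    rw [h] at hco; simp at hco
  have hsub : (univ.filter fun x : F => trF r x = 0) ⊆ P.roots.toFinset := by
    intro x hx
    simp only [mem_filter, mem_univ, true_and] at hx
    rw [Multiset.mem_toFinset, Polynomial.mem_roots hne, Polynomial.IsRoot, heval]
    exact hx
  calc (univ.filter fun x : F => trF r x = 0).card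
      ≤ P.roots.toFinset.card := card_le_card hsub
    _ ≤ Multiset.card P.roots := Multiset.toFinset_card_le _
    _ ≤ P.natDegree := Polynomial.card_roots' P
    _ ≤ 2 ^ (r-1) := hdeg

end Aux

set_option maxHeartbeats 1000000 in
/-- If `b ∉ Θ(F_q) = {α² + α : α ∈ F_q}` (equivalently `x² + x + b` is irreducible over
`F_q`), then for every `a ∈ F_q*`, `∑_{α ∈ F_q} λ(a·(α² + α + b)⁻¹) = −K(a) − 1`. -/
theorem sum_lam_artinSchreier_shift_inv {F : Type*} [Field F] [Fintype F] [DecidableEq F]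
    (r : ℕ) (hr : 0 < r) (hF : Fintype.card F = 2 ^ r)
    (b : F) (hb : ∀ α : F, α ^ 2 + α ≠ b)
    (a : F) (ha : a ≠ 0) :
    ∑ α : F, lamF r (a * (α ^ 2 + α + b)⁻¹) = -(Kloos r a) - 1 := by
  haveI h2 : CharP F 2 := char_two_of_card r hr hF
  have hc2 : (2 : F) = 0 := CharTwo.two_eq_zero
  have htrAS : ∀ α : F, trF r (α ^ 2 + α) = 0 := fun α => by
    rw [trF_add h2, trF_sq r hF]
    exact CharTwo.add_self_eq_zero _
  set T0 := univ.filter (fun x : F => trF r x = 0) with hT0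
  set T1 := univ.filter (fun x : F => ¬ trF r x = 0) with hT1
  set Θ := univ.image (fun α : F => α ^ 2 + α) with hΘ
  have hΘT0 : Θ ⊆ T0 := by
    intro x hx
    rw [hΘ, mem_image] at hx
    obtain ⟨α, -, rfl⟩ := hx
    simp only [hT0, mem_filter, mem_univ, true_and]
    exact htrAS α
  have hcard2 : 2 ^ r = 2 * 2 ^ (r - 1) := by
    rw [← pow_succ']
    congr 1
    omega
  have hfibers : ∀ v ∈ Θ, (univ.filter fun α : F => α ^ 2 + α = v).card = 2 := by
    intro v hv
    rw [hΘ, mem_image] at hv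
    obtain ⟨α0, -, h0⟩ := hv
    exact fiber_card h2 v α0 h0
  have hcardΘ2 : Fintype.card F = 2 * Θ.card := by
    rw [← Finset.card_univ, Finset.card_eq_sum_card_image (fun α : F => α ^ 2 + α) univ, ← hΘ,
      Finset.sum_congr rfl hfibers, Finset.sum_const, smul_eq_mul, mul_comm]
  have hΘcard : Θ.card = 2 ^ (r - 1) :=
    Nat.eq_of_mul_eq_mul_left two_pos (by rw [← hcardΘ2, hF, hcard2])
  have hT0card_le := card_trF_zero_le (F := F) r hr
  rw [← hT0] at hT0card_le
  have hT0eq : T0 = Θ :=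
    (Finset.eq_of_subset_of_card_le hΘT0 (by rw [hΘcard]; exact hT0card_le)).symm
  have hT0card : T0.card = 2 ^ (r - 1) := by rw [hT0eq, hΘcard]
  have hT1card : T1.card = 2 ^ (r - 1) := by
    have h := Finset.card_filter_add_card_filter_not
      (s := (univ : Finset F)) (p := fun x : F => trF r x = 0)
    rw [← hT0, ← hT1, Finset.card_univ, hF, hcard2, hT0card] at h
    have h2m : 2 * 2 ^ (r-1) = 2 ^ (r-1) + 2 ^ (r-1) := by ring
    rw [h2m] at h
    exact Nat.add_left_cancel h
  have hbT0 : b ∉ T0 := by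
    rw [hT0eq, hΘ]
    simp only [mem_image, mem_univ, true_and, not_exists]
    exact fun α h => hb α h
  have htrb : trF r b = 1 := by
    rcases trF_mem h2 r hF b with h | h
    · exact absurd (by simp [hT0, h]) hbT0
    · exact h
  have himg : univ.image (fun α : F => α ^ 2 + α + b) = T1 := by
    ext t
    simp only [mem_image, mem_univ, true_and, hT1, mem_filter]
    constructor
    · rintro ⟨α, rfl⟩
      rw [trF_add h2, htrAS, htrb, zero_add]
      exact one_ne_zero
    · intro ht
      have htr_t : trF r t = 1 := (trF_mem h2 r hF t).resolve_left ht
      have htb : trF r (t + b) = 0 := by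
        rw [trF_add h2, htr_t, htrb, one_add_one_eq_two, hc2]
      have hmem : t + b ∈ Θ := by
        rw [← hT0eq]
        simp only [hT0, mem_filter, mem_univ, true_and]
        exact htb
      rw [hΘ, mem_image] at hmem
      obtain ⟨α, -, hα⟩ := hmem
      exact ⟨α, by linear_combination hα + b * hc2⟩
  have hfibersb : ∀ t ∈ T1, (univ.filter fun α : F => α ^ 2 + α + b = t).card = 2 := by
    intro t ht
    rw [← himg, mem_image] at ht
    obtain ⟨α0, -, h0⟩ := ht
    have hfe : (univ.filter fun α : F => α ^ 2 + α + b = t)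
        = (univ.filter fun α : F => α ^ 2 + α = t - b) := by
      apply Finset.filter_congr
      intro α _
      rw [eq_sub_iff_add_eq]
    rw [hfe]
    exact fiber_card h2 (t - b) α0 (by linear_combination h0)
  -- lamF facts
  have lam0 : lamF (F := F) r 0 = 1 := by simp [lamF, trF_zero]
  have lam_of_zero : ∀ x : F, trF r x = 0 → lamF r x = 1 := fun x hx => by simp [lamF, hx]
  have lam_of_one : ∀ x : F, trF r x ≠ 0 → lamF r x = -1 := fun x hx => by simp [lamF, hx]
  have lam_add : ∀ x y : F, lamF r (x + y) = lamF r x * lamF r y := by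
    intro x y
    rcases trF_mem h2 r hF x with hx | hx <;> rcases trF_mem h2 r hF y with hy | hy <;>
      simp [lamF, trF_add h2, hx, hy, one_add_one_eq_two, hc2]
  set S1 : ℤ := ∑ t ∈ T1, lamF r (a * t⁻¹) with hS1
  set S0 : ℤ := ∑ t ∈ T0.filter (fun x => x ≠ 0), lamF r (a * t⁻¹) with hS0
  -- main sum
  have hmain : ∑ α : F, lamF r (a * (α ^ 2 + α + b)⁻¹) = 2 * S1 := by
    rw [Finset.sum_comp (fun t : F => lamF r (a * t⁻¹)) (fun α : F => α ^ 2 + α + b), himg,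
      Finset.sum_congr rfl (fun t ht => by rw [hfibersb t ht]), hS1, Finset.mul_sum]
    apply Finset.sum_congr rfl
    intro t ht
    simp
  have hzero_tr : ∀ x : F, trF r x ≠ 0 → x ≠ 0 := fun x hx h0 => hx (by rw [h0]; exact trF_zero r)
  have hfiltT1 : (univ.filter fun α : F => α ≠ 0).filter (fun α => ¬ trF r α = 0) = T1 := by
    ext x
    simp only [mem_filter, mem_univ, true_and, hT1]
    exact ⟨fun h => h.2, fun h => ⟨hzero_tr x h, h⟩⟩
  have hfiltT0 : (univ.filter fun α : F => α ≠ 0).filter (fun α => trF r α = 0)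
      = T0.filter (fun x => x ≠ 0) := by
    ext x
    simp only [mem_filter, mem_univ, true_and, hT0]
    tauto
  have hK : Kloos r a = S0 - S1 := by
    rw [Kloos,
      ← Finset.sum_filter_add_sum_filter_not (univ.filter fun α : F => α ≠ 0)
        (fun α => trF r α = 0) (fun α => lamF r (α + a * α⁻¹)),
      hfiltT0, hfiltT1]
    have e0 : ∀ x ∈ T0.filter (fun x : F => x ≠ 0), lamF r (x + a * x⁻¹) = lamF r (a * x⁻¹) := by
      intro x hx
      simp only [hT0, mem_filter, mem_univ, true_and] at hx
      rw [lam_add, lam_of_zero x hx.1, one_mul]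
    have e1 : ∀ x ∈ T1, lamF r (x + a * x⁻¹) = - lamF r (a * x⁻¹) := by
      intro x hx
      simp only [hT1, mem_filter, mem_univ, true_and] at hx
      rw [lam_add, lam_of_one x hx, neg_one_mul]
    rw [Finset.sum_congr rfl e0, Finset.sum_congr rfl e1, Finset.sum_neg_distrib, hS0, hS1]
    ring
  have htot : ∑ x : F, lamF r x = 0 := by
    rw [← Finset.sum_filter_add_sum_filter_not univ (fun x : F => trF r x = 0) (lamF r),
      ← hT0, ← hT1,
      Finset.sum_congr rfl (fun x hx => lam_of_zero x (by
        simp only [hT0, mem_filter, mem_univ, true_and] at hx; exact hx)),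
      Finset.sum_congr rfl (fun x hx => lam_of_one x (by
        simp only [hT1, mem_filter, mem_univ, true_and] at hx; exact hx)),
      Finset.sum_const, Finset.sum_const, hT0card, hT1card]
    simp
  have hne0sum : ∑ x ∈ univ.filter (fun x : F => x ≠ 0), lamF r x = -1 := by
    have h := Finset.sum_filter_add_sum_filter_not univ (fun x : F => x = 0) (lamF r)
    have h01 : univ.filter (fun x : F => x = 0) = {0} := by
      ext x; simp
    rw [h01, Finset.sum_singleton, lam0, htot] at h
    linarith
  have hS01 : S0 + S1 = -1 := by
    have hsplit : S0 + S1 = ∑ x ∈ univ.filter (fun x : F => x ≠ 0), lamF r (a * x⁻¹) := by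
      rw [hS0, hS1, ← hfiltT0, ← hfiltT1]
      exact Finset.sum_filter_add_sum_filter_not _ _ _
    have hbij : ∑ x ∈ univ.filter (fun x : F => x ≠ 0), lamF r (a * x⁻¹)
        = ∑ x ∈ univ.filter (fun x : F => x ≠ 0), lamF r x := by
      apply Finset.sum_nbij' (fun α : F => a * α⁻¹) (fun β : F => a * β⁻¹)
      · intro x hx
        simp only [mem_filter, mem_univ, true_and] at *
        exact mul_ne_zero ha (inv_ne_zero hx)
      · intro x hx
        simp only [mem_filter, mem_univ, true_and] at *
        exact mul_ne_zero ha (inv_ne_zero hx)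
      · intro x hx
        simp only [mem_filter, mem_univ, true_and] at hx
        field_simp
      · intro x hx
        simp only [mem_filter, mem_univ, true_and] at hx
        field_simp
      · intro x hx
        rfl
    rw [hsplit, hbij, hne0sum]
  rw [hmain, hK]
  linarith
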